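/- Let g, h be Lie algebras, f = (f_1, f_0) : (δ : h_1 → h_0) → (δ : g_1 → g_0) a morphism of crossed modules of Lie algebras. Define the pullback f_0* g_1 = {(X, a) ∈ h_0 ⋉ g_1 : f_0(X) = −δ(a)}, where the semidirect product uses the action of h_0 on g_1 via f_0. Then f_0* g_1 is a Lie subalgebra with bracket [(X,a),(Y,b)] = ([X,Y], −[a,b]), the maps δ(X,a) = X and the action X ▷ (Y,b) = ([X,Y], f_0(X) ▷ b) make (δ : f_0* g_1 → h_0, ▷) a crossed module of Lie algebras, and (f̃_1, f_0) with f̃_1(X,a) = −a is a morphism of crossed modules to (δ : g_1 → g_0). -/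

import Mathlib

/-!
STATEMENT 16: The pullback crossed module of Lie algebras.  Given a morphism
`f = (f₁, f₀)` of crossed modules of Lie algebras from `(δ : h₁ → h₀)` to
`(δ : g₁ → g₀)`, the set `f₀*g₁ = {(X,a) ∈ h₀ ⋉ g₁ : f₀(X) = −δ(a)}` is a Lie
subalgebra of the semidirect product whose bracket is `[(X,a),(Y,b)] = ([X,Y], −[a,b])`;
together with `δ(X,a) = X` and the action `X ▷ (Y,b) = ([X,Y], f₀(X) ▷ b)` it is a
crossed module of Lie algebras, and `f̃₁(X,a) = −a` together with `f₀` is a morphism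
of crossed modules to `(δ : g₁ → g₀)`.
-/

/-- A crossed module of Lie algebras. -/
structure XModLie (K : Type*) (g₀ g₁ : Type*) [CommRing K]
    [LieRing g₀] [LieAlgebra K g₀] [LieRing g₁] [LieAlgebra K g₁] where
  /-- the boundary map -/
  δ : g₁ →ₗ⁅K⁆ g₀
  /-- the action of `g₀` on `g₁` -/
  act : g₀ →ₗ[K] g₁ →ₗ[K] g₁
  act_bracket : ∀ (x : g₀) (a b : g₁), act x ⁅a, b⁆ = ⁅act x a, b⁆ + ⁅a, act x b⁆
  bracket_act : ∀ (x y : g₀) (a : g₁), act ⁅x, y⁆ a = act x (act y a) - act y (act x a)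
  equivar : ∀ (x : g₀) (a : g₁), δ (act x a) = ⁅x, δ a⁆
  peiffer : ∀ a b : g₁, act (δ a) b = ⁅a, b⁆

variable {K h₀ h₁ g₀ g₁ : Type*} [CommRing K]
  [LieRing h₀] [LieAlgebra K h₀] [LieRing h₁] [LieAlgebra K h₁]
  [LieRing g₀] [LieAlgebra K g₀] [LieRing g₁] [LieAlgebra K g₁]

theorem pullback_crossed_module_of_Lie_algebras
    (H : XModLie K h₀ h₁) (G : XModLie K g₀ g₁)
    (f₀ : h₀ →ₗ⁅K⁆ g₀) (f₁ : h₁ →ₗ⁅K⁆ g₁)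
    (hδ : ∀ a : h₁, G.δ (f₁ a) = f₀ (H.δ a))
    (hact : ∀ (x : h₀) (a : h₁), f₁ (H.act x a) = G.act (f₀ x) (f₁ a)) :
    -- the pullback set
    let S : Set (h₀ × g₁) := {p | f₀ p.1 = - G.δ p.2}
    -- the candidate bracket, boundary and action on `h₀ × g₁`
    let B : h₀ × g₁ → h₀ × g₁ → h₀ × g₁ := fun p q => (⁅p.1, q.1⁆, -⁅p.2, q.2⁆)
    let actP : h₀ → h₀ × g₁ → h₀ × g₁ := fun X p => (⁅X, p.1⁆, G.act (f₀ X) p.2)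
    -- `S` is a linear subspace closed under the bracket `B`:
    (∀ p ∈ S, ∀ q ∈ S, p + q ∈ S) ∧
    (∀ (c : K), ∀ p ∈ S, c • p ∈ S) ∧
    (∀ p ∈ S, ∀ q ∈ S, B p q ∈ S) ∧
    -- on `S`, the semidirect product bracket coincides with `B`:
    (∀ p ∈ S, ∀ q ∈ S,
      (⁅p.1, q.1⁆, G.act (f₀ p.1) q.2 - G.act (f₀ q.1) p.2 + ⁅p.2, q.2⁆) = B p q) ∧
    -- `actP` preserves `S` and, with `δ(X,a) = X`, satisfies the crossed module axioms:
    (∀ (X : h₀), ∀ p ∈ S, actP X p ∈ S) ∧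
    (∀ (X : h₀), ∀ p ∈ S, ∀ q ∈ S, actP X (B p q) = B (actP X p) q + B p (actP X q)) ∧
    (∀ (X Y : h₀) (p : h₀ × g₁), actP ⁅X, Y⁆ p = actP X (actP Y p) - actP Y (actP X p)) ∧
    (∀ (X : h₀) (p : h₀ × g₁), (actP X p).1 = ⁅X, p.1⁆) ∧
    (∀ p ∈ S, ∀ q ∈ S, actP p.1 q = B p q) ∧
    -- `(f̃₁, f₀)` with `f̃₁(X,a) = −a` is a morphism of crossed modules:
    (∀ p ∈ S, G.δ (-p.2) = f₀ p.1) ∧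
    (∀ p ∈ S, ∀ q ∈ S, -((B p q).2) = ⁅-p.2, -q.2⁆) ∧
    (∀ (X : h₀), ∀ p ∈ S, -((actP X p).2) = G.act (f₀ X) (-p.2)) := by
  intro S B actP
  have hmem : ∀ p : h₀ × g₁, p ∈ S ↔ f₀ p.1 = - G.δ p.2 := fun _ => Iff.rfl
  refine ⟨?_, ?_, ?_, ?_, ?_, ?_, ?_, ?_, ?_, ?_, ?_, ?_⟩
  · intro p hp q hq
    simp only [hmem] at *
    simp [hp, hq, neg_add]
    abel
  · intro c p hp
    simp only [hmem] at *
    simp [hp]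
  · intro p hp q hq
    simp only [hmem] at *
    simp [B, hp, hq]
  · intro p hp q hq
    simp only [hmem] at hp hq
    have h1 : G.act (f₀ p.1) q.2 = -⁅p.2, q.2⁆ := by
      rw [hp]; simp [G.peiffer]
    have h2 : G.act (f₀ q.1) p.2 = ⁅p.2, q.2⁆ := by
      rw [hq]; simp [G.peiffer, lie_skew]
    simp only [B, h1, h2, Prod.mk.injEq]
    refine ⟨trivial, by abel⟩
  · intro X p hp
    simp only [hmem] at *
    simp [actP, hp, G.equivar]
  · intro X p _ q _
    simp only [B, actP, Prod.mk.injEq, Prod.mk_add_mk]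
    constructor
    · rw [leibniz_lie]
    · rw [map_neg, G.act_bracket]; abel
  · intro X Y p
    simp only [actP, Prod.mk.injEq, Prod.mk_sub_mk, LieHom.map_lie, G.bracket_act]
    constructor
    · rw [lie_lie]
    · trivial
  · intro X p; rfl
  · intro p hp q hq
    simp only [hmem] at hp hq
    simp only [actP, B, Prod.mk.injEq]
    exact ⟨trivial, by rw [hp]; simp [G.peiffer]⟩
  · intro p hp
    simp only [hmem] at hp
    simp [hp]
  · intro p _ q _
    simp [B]
  · intro X p _
    simp [actP]
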